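/- Uniqueness of decomposition data: Let P be a finite poset with a strictly order-reversing function ε: P → ℤ, and suppose given g_{λ,μ} ∈ ℂ[t] for all λ ≥ μ in P. Suppose (b_{λ,μ,j})_{j∈ℤ} and L_{λ,μ} ∈ ℂ[t] satisfy: (1) g_{λ,μ}(t) = ∑_{λ ≥ ν ≥ μ} (∑_{j ≡ ε(ν)-ε(λ) mod 2} b_{λ,ν,j} t^{(ε(ν)-ε(λ)-j)/2}) L_{ν,μ}(t); (2) b_{λ,λ,j} = δ_{j,0}; (3) b_{λ,μ,j} = b_{λ,μ,-j}; (4) b_{λ,μ,j} = 0 if j ≢ ε(μ)-ε(λ) mod 2; (5) L_{λ,λ} = 1; (6) deg L_{λ,μ} < (ε(μ)-ε(λ))/2 for μ < λ. Then the data (b, L) is uniquely determined by g. -/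

import Mathlib

open LaurentPolynomial Polynomial

/-- `(b, L)` is a solution of the system of conditions (1)–(6) of Lemma 4.2:
`P` is a finite poset, `ε : P → ℤ` (strictly order-reversing in the theorem),
`g` the given family of polynomials.  Condition (1) is written in the ring of
Laurent polynomials, the inner sum over `j ∈ ℤ` being a `finsum` (the supports
are required to be finite), with the monomial `t^{(ε(ν)-ε(λ)-j)/2}` occurring
exactly for `j ≡ ε(ν)-ε(λ) (mod 2)`. -/
def IsSol {P : Type*} [PartialOrder P] [Fintype P]
    [DecidableRel (fun a b : P => a ≤ b)]
    (ε : P → ℤ) (g : P → P → Polynomial ℂ)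
    (b : P → P → ℤ → ℂ) (L : P → P → Polynomial ℂ) : Prop :=
  (∀ lam mu, (Function.support (b lam mu)).Finite) ∧
  -- (1)
  (∀ lam mu : P, mu ≤ lam →
    (g lam mu).toLaurent =
      ∑ ν ∈ Finset.univ.filter (fun ν => mu ≤ ν ∧ ν ≤ lam),
        (∑ᶠ j : ℤ,
          if (ε ν - ε lam - j) % 2 = 0 then
            b lam ν j • LaurentPolynomial.T (R := ℂ) ((ε ν - ε lam - j) / 2)
          else 0) * (L ν mu).toLaurent) ∧
  -- (2)
  (∀ lam : P, ∀ j : ℤ, b lam lam j = if j = 0 then 1 else 0) ∧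
  -- (3)
  (∀ lam mu : P, ∀ j : ℤ, b lam mu j = b lam mu (-j)) ∧
  -- (4)
  (∀ lam mu : P, ∀ j : ℤ, (ε mu - ε lam - j) % 2 ≠ 0 → b lam mu j = 0) ∧
  -- (5)
  (∀ lam : P, L lam lam = 1) ∧
  -- (6)
  (∀ lam mu : P, mu < lam → 2 * ((L lam mu).natDegree : ℤ) < ε mu - ε lam)

/-- The Laurent polynomial `∑_j c_j t^{(d-j)/2}` attached to coefficient data `c`. -/
noncomputable def Sfun (d : ℤ) (c : ℤ → ℂ) : LaurentPolynomial ℂ :=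
  ∑ᶠ j : ℤ, if (d - j) % 2 = 0 then c j • LaurentPolynomial.T (R := ℂ) ((d - j) / 2) else 0

lemma Sfun_apply (d : ℤ) (c : ℤ → ℂ) (hc : (Function.support c).Finite) (m : ℤ) :
    (Sfun d c).coeff m = c (d - 2 * m) := by
  have hsupp : (Function.support fun j =>
      if (d - j) % 2 = 0 then c j • LaurentPolynomial.T (R := ℂ) ((d - j) / 2) else 0)
      ⊆ Function.support c := by
    intro j hj
    simp only [Function.mem_support] at hj ⊢
    intro hcj
    apply hj
    simp [hcj]
  have h1 : (Sfun d c).coeff m = ∑ᶠ j : ℤ,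
      (if (d - j) % 2 = 0 then c j • LaurentPolynomial.T (R := ℂ) ((d - j) / 2) else 0).coeff m :=
    ((Finsupp.applyAddHom m).comp (AddMonoidAlgebra.coeffAddEquiv (R := ℂ) (M := ℤ)).toAddMonoidHom).map_finsum (hc.subset hsupp)
  rw [h1, finsum_eq_single _ (d - 2 * m)]
  · rw [if_pos (by omega : (d - (d - 2 * m)) % 2 = 0), AddMonoidAlgebra.coeff_smul_apply,
      T_apply, if_pos (by omega : (d - (d - 2 * m)) / 2 = m)]
    simp
  · intro j hj
    by_cases hmod : (d - j) % 2 = 0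
    · rw [if_pos hmod, AddMonoidAlgebra.coeff_smul_apply, T_apply,
        if_neg (by omega : ¬ (d - j) / 2 = m), smul_zero]
    · rw [if_neg hmod]; rfl

lemma Sfun_delta : Sfun 0 (fun j => if j = (0 : ℤ) then (1 : ℂ) else 0) = 1 := by
  have hfin : (Function.support fun j => if j = (0 : ℤ) then (1 : ℂ) else 0) ⊆ {0} := by
    intro j hj
    simp only [Function.mem_support] at hj
    by_contra hj0
    exact hj (if_neg hj0)
  apply LaurentPolynomial.ext
  intro m
  rw [Sfun_apply 0 _ ((Set.finite_singleton 0).subset hfin) m,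
    ← LaurentPolynomial.single_zero_one_eq_one, AddMonoidAlgebra.coeff_single_apply]
  split_ifs with hA hB hB
  · rfl
  · omega
  · omega
  · rfl

lemma toLaurent_apply_natCast (p : Polynomial ℂ) (n : ℕ) :
    (p.toLaurent).coeff (n : ℤ) = p.coeff n := by
  rw [coeff_toLaurent]
  exact Finsupp.mapDomain_apply Nat.castEmbedding.injective _ n

lemma toLaurent_apply_neg (p : Polynomial ℂ) (m : ℤ) (hm : m < 0) : (p.toLaurent).coeff m = 0 := by
  rw [coeff_toLaurent, Finsupp.mapDomain_notin_range]
  rintro ⟨n, rfl⟩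
  simp at hm
  omega

lemma toLaurent_bound (p : Polynomial ℂ) (d m : ℤ) (hdeg : 2 * (p.natDegree : ℤ) < d)
    (hm : d ≤ 2 * m) : (p.toLaurent).coeff m = 0 := by
  have hm0 : 0 ≤ m := by omega
  lift m to ℕ using hm0
  rw [toLaurent_apply_natCast]
  exact Polynomial.coeff_eq_zero_of_natDegree_lt (by omega)

/-- uniqueness of the decomposition data: if `ε` is strictly
order-reversing and `(b, L)`, `(b', L')` both satisfy conditions (1)–(6)
for the same `g`, then `b = b'` and `L = L'` on all pairs `μ ≤ λ`. -/
theorem stmt_11 {P : Type*} [PartialOrder P] [Fintype P]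
    [DecidableRel (fun a b : P => a ≤ b)]
    (ε : P → ℤ) (hε : ∀ mu lam : P, mu < lam → ε lam < ε mu)
    (g : P → P → Polynomial ℂ)
    (b b' : P → P → ℤ → ℂ) (L L' : P → P → Polynomial ℂ)
    (h : IsSol ε g b L) (h' : IsSol ε g b' L') :
    ∀ lam mu : P, mu ≤ lam →
      (∀ j : ℤ, b lam mu j = b' lam mu j) ∧ L lam mu = L' lam mu := by
  classical
  obtain ⟨hbf, h1, h2, h3, h4, h5, h6⟩ := h
  obtain ⟨hbf', h1', h2', h3', h4', h5', h6'⟩ := h'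
  suffices H : ∀ n : ℕ, ∀ lam mu : P, mu ≤ lam →
      (Finset.univ.filter (fun ν => mu ≤ ν ∧ ν ≤ lam)).card ≤ n →
      (∀ j : ℤ, b lam mu j = b' lam mu j) ∧ L lam mu = L' lam mu by
    exact fun lam mu hle => H _ lam mu hle le_rfl
  intro n
  induction n with
  | zero =>
    intro lam mu hle hcard
    exact absurd hcard (by
      simp only [not_le]
      exact Finset.card_pos.mpr ⟨mu, by simp [hle]⟩)
  | succ n ih =>
    intro lam mu hle hcard
    rcases eq_or_lt_of_le hle with rfl | hlt
    · exact ⟨fun j => by rw [h2, h2'], by rw [h5, h5']⟩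
    set I := Finset.univ.filter (fun ν => mu ≤ ν ∧ ν ≤ lam) with hI
    have hmuI : mu ∈ I := Finset.mem_filter.mpr ⟨Finset.mem_univ _, le_rfl, hle⟩
    have hlamI : lam ∈ I := Finset.mem_filter.mpr ⟨Finset.mem_univ _, hle, le_rfl⟩
    have hne : mu ≠ lam := ne_of_lt hlt
    -- cardinalities for the inner induction
    have cardb : ∀ ν : P, mu < ν → ν ≤ lam →
        (Finset.univ.filter (fun x => ν ≤ x ∧ x ≤ lam)).card ≤ n := by
      intro ν hν hν'
      have hsub : (Finset.univ.filter (fun x => ν ≤ x ∧ x ≤ lam)) ⊆ I.erase mu := by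
        intro x hx
        simp only [Finset.mem_filter, Finset.mem_univ, true_and] at hx
        refine Finset.mem_erase.mpr ⟨?_, by simp [hI]; exact ⟨le_trans hν.le hx.1, hx.2⟩⟩
        intro hxm
        exact hν.not_ge (hxm ▸ hx.1)
      have := Finset.card_le_card hsub
      rw [Finset.card_erase_of_mem hmuI] at this
      omega
    have cardL : ∀ ν : P, mu ≤ ν → ν < lam →
        (Finset.univ.filter (fun x => mu ≤ x ∧ x ≤ ν)).card ≤ n := by
      intro ν hν hν'
      have hsub : (Finset.univ.filter (fun x => mu ≤ x ∧ x ≤ ν)) ⊆ I.erase lam := by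
        intro x hx
        simp only [Finset.mem_filter, Finset.mem_univ, true_and] at hx
        refine Finset.mem_erase.mpr ⟨?_, by simp [hI]; exact ⟨hx.1, le_trans hx.2 hν'.le⟩⟩
        intro hxl
        exact hν'.not_ge (hxl ▸ hx.2)
      have := Finset.card_le_card hsub
      rw [Finset.card_erase_of_mem hlamI] at this
      omega
    have hbmid : ∀ ν : P, mu < ν → ν ≤ lam → ∀ j, b lam ν j = b' lam ν j :=
      fun ν hν hν' => (ih lam ν hν' (cardb ν hν hν')).1
    have hLmid : ∀ ν : P, mu ≤ ν → ν < lam → L ν mu = L' ν mu :=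
      fun ν hν hν' => (ih ν mu hν (cardL ν hν hν')).2
    -- the two expansions of g agree
    have hsum : ∑ ν ∈ I, Sfun (ε ν - ε lam) (b lam ν) * (L ν mu).toLaurent
        = ∑ ν ∈ I, Sfun (ε ν - ε lam) (b' lam ν) * (L' ν mu).toLaurent :=
      (h1 lam mu hle).symm.trans (h1' lam mu hle)
    have hpair : ∑ ν ∈ I, (Sfun (ε ν - ε lam) (b lam ν) * (L ν mu).toLaurent
        - Sfun (ε ν - ε lam) (b' lam ν) * (L' ν mu).toLaurent) = 0 := by
      rw [Finset.sum_sub_distrib, hsum, sub_self]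
    have hpair2 : ∑ ν ∈ I, (Sfun (ε ν - ε lam) (b lam ν) * (L ν mu).toLaurent
        - Sfun (ε ν - ε lam) (b' lam ν) * (L' ν mu).toLaurent)
        = (Sfun (ε mu - ε lam) (b lam mu) * (L mu mu).toLaurent
            - Sfun (ε mu - ε lam) (b' lam mu) * (L' mu mu).toLaurent)
        + (Sfun (ε lam - ε lam) (b lam lam) * (L lam mu).toLaurent
            - Sfun (ε lam - ε lam) (b' lam lam) * (L' lam mu).toLaurent) := by
      have hsubset : ({mu, lam} : Finset P) ⊆ I := by
        intro x hx
        rcases Finset.mem_insert.mp hx with rfl | hx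
        · exact hmuI
        · rw [Finset.mem_singleton] at hx
          exact hx ▸ hlamI
      have hzero : ∀ ν ∈ I, ν ∉ ({mu, lam} : Finset P) →
          Sfun (ε ν - ε lam) (b lam ν) * (L ν mu).toLaurent
            - Sfun (ε ν - ε lam) (b' lam ν) * (L' ν mu).toLaurent = 0 := by
        intro ν hν hν'
        simp only [Finset.mem_insert, Finset.mem_singleton, not_or] at hν'
        simp only [hI, Finset.mem_filter, Finset.mem_univ, true_and] at hν
        have hν1 : mu < ν := lt_of_le_of_ne hν.1 (Ne.symm hν'.1)
        have hν2 : ν < lam := lt_of_le_of_ne hν.2 hν'.2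
        rw [funext (hbmid ν hν1 hν2.le), hLmid ν hν1.le hν2, sub_self]
      refine Eq.trans (Finset.sum_subset hsubset hzero).symm ?_
      rw [Finset.sum_pair hne]
    -- simplify the endpoints
    have hSll : Sfun (ε lam - ε lam) (b lam lam) = 1 := by
      rw [funext (h2 lam), sub_self]
      exact Sfun_delta
    have hSll' : Sfun (ε lam - ε lam) (b' lam lam) = 1 := by
      rw [funext (h2' lam), sub_self]
      exact Sfun_delta
    have hkey : Sfun (ε mu - ε lam) (b lam mu) + (L lam mu).toLaurent
        = Sfun (ε mu - ε lam) (b' lam mu) + (L' lam mu).toLaurent := by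
      have h0 := hpair2 ▸ hpair
      rw [hSll, hSll', h5 mu, h5' mu, Polynomial.toLaurent_one, mul_one, mul_one,
        one_mul, one_mul] at h0
      linear_combination h0
    set d := ε mu - ε lam with hd_def
    have hd : 0 < d := by
      have := hε mu lam hlt
      omega
    have hco : ∀ m : ℤ, b lam mu (d - 2 * m) + (L lam mu).toLaurent.coeff m
        = b' lam mu (d - 2 * m) + (L' lam mu).toLaurent.coeff m := by
      intro m
      have hm : (Sfun d (b lam mu)).coeff m + (L lam mu).toLaurent.coeff m
          = (Sfun d (b' lam mu)).coeff m + (L' lam mu).toLaurent.coeff m :=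
        congrArg (fun f : LaurentPolynomial ℂ => f.coeff m) hkey
      rw [Sfun_apply d (b lam mu) (hbf lam mu) m,
        Sfun_apply d (b' lam mu) (hbf' lam mu) m] at hm
      exact hm
    have hFhigh : ∀ m : ℤ, d ≤ 2 * m →
        (L lam mu).toLaurent.coeff m - (L' lam mu).toLaurent.coeff m = 0 := by
      intro m hm
      rw [toLaurent_bound _ d m (h6 lam mu hlt) hm,
        toLaurent_bound _ d m (h6' lam mu hlt) hm, sub_self]
    have hFofb : ∀ m : ℤ, (L lam mu).toLaurent.coeff m - (L' lam mu).toLaurent.coeff m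
        = b' lam mu (d - 2 * m) - b lam mu (d - 2 * m) := by
      intro m
      have := hco m
      linear_combination this
    have hsymm : ∀ m : ℤ, (L lam mu).toLaurent.coeff m - (L' lam mu).toLaurent.coeff m
        = (L lam mu).toLaurent.coeff (d - m) - (L' lam mu).toLaurent.coeff (d - m) := by
      intro m
      rw [hFofb m, hFofb (d - m)]
      have e1 : d - 2 * (d - m) = -(d - 2 * m) := by ring
      rw [e1, ← h3 lam mu (d - 2 * m), ← h3' lam mu (d - 2 * m)]
    have hF0 : ∀ m : ℤ, (L lam mu).toLaurent.coeff m - (L' lam mu).toLaurent.coeff m = 0 := by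
      intro m
      rcases le_or_gt d (2 * m) with hm | hm
      · exact hFhigh m hm
      · rw [hsymm m]
        exact hFhigh (d - m) (by omega)
    have hL : L lam mu = L' lam mu := by
      apply Polynomial.toLaurent_injective
      apply LaurentPolynomial.ext
      intro m
      exact sub_eq_zero.mp (hF0 m)
    refine ⟨?_, hL⟩
    intro j
    by_cases hj : (d - j) % 2 = 0
    · have hjj : j = d - 2 * ((d - j) / 2) := by omega
      have := hF0 ((d - j) / 2)
      have hb := hFofb ((d - j) / 2)
      rw [this] at hb
      rw [hjj]
      have := sub_eq_zero.mp hb.symm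
      exact this.symm
    · rw [h4 lam mu j hj, h4' lam mu j hj]
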